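/- Let H₁ and H₂ be finite-dimensional complex Hilbert spaces, let {φᵢ} and {χᵢ} be orthonormal bases of H₁ and H₂ respectively, and let ρ = Σ_{i,j} a_{ij} |φᵢ⟩⟨φⱼ| ⊗ |χᵢ⟩⟨χⱼ| be a density operator on H₁ ⊗ H₂ with complex coefficients a_{ij}. Then ‖ρ‖_γ = Σ_{i,j} |a_{ij}|. -/

import Mathlib

set_option maxHeartbeats 1000000


open Matrix
open scoped Kronecker ComplexOrder

noncomputable def traceNorm {n : Type*} [Fintype n] [DecidableEq n] (A : Matrix n n ℂ) : ℝ :=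
  ((Matrix.posSemidef_conjTranspose_mul_self A).1.eigenvectorUnitary.1 *
    Matrix.diagonal (((↑) : ℝ → ℂ) ∘ Real.sqrt ∘ (Matrix.posSemidef_conjTranspose_mul_self A).1.eigenvalues) *
    (star (Matrix.posSemidef_conjTranspose_mul_self A).1.eigenvectorUnitary : Matrix n n ℂ)).trace.re

noncomputable def gammaNorm {m n : Type*} [Fintype m] [DecidableEq m] [Fintype n] [DecidableEq n]
    (t : Matrix (m × n) (m × n) ℂ) : ℝ :=
  sInf { c : ℝ | ∃ (r : ℕ) (u : Fin r → Matrix m m ℂ) (v : Fin r → Matrix n n ℂ),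
    t = ∑ i, (u i) ⊗ₖ (v i) ∧ c = ∑ i, traceNorm (u i) * traceNorm (v i) }

def IsDensity {n : Type*} [Fintype n] (ρ : Matrix n n ℂ) : Prop :=
  ρ.PosSemidef ∧ ρ.trace = 1

def evec {ι : Type*} (ψ : EuclideanSpace ℂ ι) : ι → ℂ := ψ

noncomputable def tensorVec {ι κ : Type*} (a : EuclideanSpace ℂ ι) (b : EuclideanSpace ℂ κ) :
    EuclideanSpace ℂ (ι × κ) :=
  (WithLp.equiv 2 _).symm (fun p => evec a p.1 * evec b p.2)

noncomputable def projOnto {ι : Type*} (ψ : EuclideanSpace ℂ ι) : Matrix ι ι ℂ :=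
  Matrix.vecMulVec (evec ψ) (star (evec ψ))

/-- The rank-one operator `|x⟩⟨y|`, i.e. `z ↦ ⟨y, z⟩ x`, as a matrix. -/
noncomputable def ketBra {ι : Type*} (x y : EuclideanSpace ℂ ι) : Matrix ι ι ℂ :=
  Matrix.vecMulVec (evec x) (star (evec y))

/-! ### Auxiliary lemmas -/

open scoped MatrixOrder

lemma traceNorm_eq_sqrt {k : Type*} [Fintype k] [DecidableEq k] (A : Matrix k k ℂ) :
    traceNorm A = (CFC.sqrt (Aᴴ * A)).trace.re := by
  rw [traceNorm, CFC.sqrt_eq_cfc,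
    cfc_nnreal_eq_real _ (Aᴴ * A) (Matrix.posSemidef_conjTranspose_mul_self A).nonneg,
    (Matrix.posSemidef_conjTranspose_mul_self A).1.cfc_eq, IsHermitian.cfc,
    Unitary.conjStarAlgAut_apply]
  have hf : (RCLike.ofReal ∘ (fun x : ℝ => ((NNReal.sqrt x.toNNReal : NNReal) : ℝ)) ∘
      (posSemidef_conjTranspose_mul_self A).1.eigenvalues : k → ℂ)
      = ((↑) : ℝ → ℂ) ∘ Real.sqrt ∘ (posSemidef_conjTranspose_mul_self A).1.eigenvalues := by
    funext i
    simp [Real.coe_sqrt, Real.coe_toNNReal',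
      max_eq_left ((posSemidef_conjTranspose_mul_self A).eigenvalues_nonneg i)]
  rw [hf]

lemma star_pi_single {k : Type*} [DecidableEq k] (i : k) (z : ℂ) :
    star (Pi.single i z : k → ℂ) = Pi.single i (starRingEnd ℂ z) := by
  funext p
  by_cases h : p = i <;> simp [Pi.single_apply, h]

lemma psd_re_diag_nonneg {k : Type*} [Fintype k] [DecidableEq k] {S : Matrix k k ℂ}
    (hS : S.PosSemidef) (i : k) : 0 ≤ (S i i).re := by
  have h := hS.dotProduct_mulVec_nonneg (Pi.single i 1)
  have e : star (Pi.single i (1:ℂ)) ⬝ᵥ S *ᵥ Pi.single i 1 = S i i := by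
    simp [dotProduct, mulVec_single, Pi.single_apply, apply_ite]
  rw [e] at h
  exact (Complex.nonneg_iff.mp h).1

lemma herm_apply {k : Type*} [Fintype k] [DecidableEq k] {S : Matrix k k ℂ}
    (hS : S.IsHermitian) (i j : k) : S j i = starRingEnd ℂ (S i j) := by
  have := congrFun (congrFun hS j) i
  simpa [Matrix.conjTranspose_apply] using this.symm

lemma psd_diag_re_eq_abs {k : Type*} [Fintype k] [DecidableEq k] {S : Matrix k k ℂ}
    (hS : S.PosSemidef) (i : k) : ‖S i i‖ = (S i i).re := by
  have him : (S i i).im = 0 := by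
    have := herm_apply hS.1 i i
    have h2 := congrArg Complex.im this
    simp [Complex.conj_im] at h2
    linarith
  rw [Complex.norm_def, Complex.normSq_apply, him]
  simpa [← pow_two] using Real.sqrt_sq (psd_re_diag_nonneg hS i)

lemma psd_entry_sq_le {k : Type*} [Fintype k] [DecidableEq k] {S : Matrix k k ℂ}
    (hS : S.PosSemidef) (i j : k) :
    ‖S i j‖ ^ 2 ≤ (S i i).re * (S j j).re := by
  by_cases hij : i = j
  · subst hij
    rw [← psd_diag_re_eq_abs hS i, ← pow_two]
  by_cases h0 : S i j = 0
  · rw [h0]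
    simpa using mul_nonneg (psd_re_diag_nonneg hS i) (psd_re_diag_nonneg hS j)
  set A := (‖S i j‖ : ℝ) with hA
  have hA0 : 0 < A := norm_pos_iff.mpr h0
  have hAC : (A : ℂ) ≠ 0 := by exact_mod_cast (norm_ne_zero_iff.mpr h0)
  set c : ℂ := -(starRingEnd ℂ (S i j)) / A with hc
  have hconj : starRingEnd ℂ (S i j) * S i j = ((A^2 : ℝ) : ℂ) := by
    rw [mul_comm, Complex.mul_conj]
    push_cast [hA, Complex.sq_norm]
    rfl
  have hc1 : c * S i j = -(A : ℂ) := by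
    rw [hc]
    field_simp
    rw [hconj]
    push_cast
    ring
  have hc2 : starRingEnd ℂ c * S j i = -(A : ℂ) := by
    rw [herm_apply hS.1 i j, hc]
    simp only [map_div₀, map_neg, Complex.conj_conj, Complex.conj_ofReal]
    field_simp
    rw [mul_comm, hconj]
    push_cast
    ring
  have hc3 : starRingEnd ℂ c * c = 1 := by
    rw [hc]
    simp only [map_div₀, map_neg, Complex.conj_conj, Complex.conj_ofReal]
    field_simp
    rw [mul_comm, hconj]
    push_cast
    ring
  have hq : ∀ t : ℝ, 0 ≤ (S i i).re * (t * t) + (-(2 * A)) * t + (S j j).re := by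
    intro t
    have h := hS.dotProduct_mulVec_nonneg (Pi.single i (t : ℂ) + Pi.single j c)
    have hx : S *ᵥ (Pi.single i (t:ℂ) + Pi.single j c) = fun p => S p i * t + S p j * c := by
      funext p
      simp [mulVec_add, mulVec_single]
      ring
    have hdot : star (Pi.single i (t:ℂ) + Pi.single j c) ⬝ᵥ (fun p => S p i * t + S p j * c)
        = (t:ℂ) * (S i i * t + S i j * c) + starRingEnd ℂ c * (S j i * t + S j j * c) := by
      rw [star_add, star_pi_single, star_pi_single, add_dotProduct,
        single_dotProduct, single_dotProduct]
      simp [Complex.conj_ofReal]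
    rw [hx, hdot] at h
    have hval : (t:ℂ) * (S i i * t + S i j * c) + starRingEnd ℂ c * (S j i * t + S j j * c)
        = (t:ℂ) * (t:ℂ) * S i i + (-(2*A) : ℝ) * t + S j j := by
      have e1 : (t:ℂ) * (S i j * c) = t * (c * S i j) := by ring
      have e2 : starRingEnd ℂ c * (S j i * t) = (starRingEnd ℂ c * S j i) * t := by ring
      have e3 : starRingEnd ℂ c * (S j j * c) = (starRingEnd ℂ c * c) * S j j := by ring
      rw [mul_add, mul_add, e1, e2, e3, hc1, hc2, hc3]
      push_cast
      ring
    rw [hval] at h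
    have h2 := (Complex.nonneg_iff.mp h).1
    simp [Complex.add_re, Complex.mul_re, Complex.ofReal_re, Complex.ofReal_im] at h2
    linarith
  have hd := discrim_le_zero hq
  rw [discrim] at hd
  nlinarith [hA0]

lemma traceNorm_nonneg {k : Type*} [Fintype k] [DecidableEq k] (A : Matrix k k ℂ) :
    0 ≤ traceNorm A := by
  have hS := (CFC.sqrt_nonneg (Aᴴ * A)).posSemidef
  rw [traceNorm_eq_sqrt, Matrix.trace, Complex.re_sum]
  exact Finset.sum_nonneg fun i _ => psd_re_diag_nonneg hS i

lemma sum_abs_sq_le_traceNorm_sq {k : Type*} [Fintype k] [DecidableEq k] (A : Matrix k k ℂ) :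
    ∑ i, ∑ j, ‖A i j‖ ^ 2 ≤ traceNorm A ^ 2 := by
  set hP := Matrix.posSemidef_conjTranspose_mul_self A with hPdef
  set S := CFC.sqrt (Aᴴ * A) with hSdef
  have hS : S.PosSemidef := (CFC.sqrt_nonneg (Aᴴ * A)).posSemidef
  have hsq : S * S = Aᴴ * A := CFC.sqrt_mul_sqrt_self _ hP.nonneg
  have h1 : ∑ i, ∑ j, ‖A i j‖ ^ 2 = ((Aᴴ * A).trace).re := by
    rw [Matrix.trace, Complex.re_sum, Finset.sum_comm]
    refine Finset.sum_congr rfl fun j _ => ?_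
    rw [Matrix.diag_apply, Matrix.mul_apply, Complex.re_sum]
    refine Finset.sum_congr rfl fun i _ => ?_
    rw [Matrix.conjTranspose_apply]
    simp [Complex.sq_norm, ← Complex.normSq_eq_conj_mul_self]
  have h2 : ((Aᴴ * A).trace).re = ∑ i, ∑ j, ‖S i j‖ ^ 2 := by
    rw [← hsq, Matrix.trace, Complex.re_sum]
    refine Finset.sum_congr rfl fun i _ => ?_
    rw [Matrix.diag_apply, Matrix.mul_apply, Complex.re_sum]
    refine Finset.sum_congr rfl fun j _ => ?_
    rw [herm_apply hS.1 i j, Complex.mul_conj]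
    simp [Complex.sq_norm]
  have h3 : ∑ i, ∑ j, ‖S i j‖ ^ 2 ≤ (∑ i, (S i i).re) ^ 2 := by
    calc ∑ i, ∑ j, ‖S i j‖ ^ 2
        ≤ ∑ i, ∑ j, (S i i).re * (S j j).re := by
          refine Finset.sum_le_sum fun i _ => Finset.sum_le_sum fun j _ => psd_entry_sq_le hS i j
      _ = (∑ i, (S i i).re) ^ 2 := by
          rw [sq, Finset.sum_mul_sum]
  have h4 : traceNorm A = ∑ i, (S i i).re := by
    rw [traceNorm_eq_sqrt, Matrix.trace, Complex.re_sum]; rfl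
  rw [h1, h2, h4]
  exact h3

lemma euclid_inner_eq {m : ℕ} (x y : EuclideanSpace ℂ (Fin m)) :
    (inner ℂ x y : ℂ) = star (evec x) ⬝ᵥ (evec y) := by
  simp [PiLp.inner_apply, dotProduct, RCLike.inner_apply, evec, mul_comm]

lemma euclid_norm_sq {m : ℕ} (x : EuclideanSpace ℂ (Fin m)) :
    ‖x‖ ^ 2 = ∑ p, ‖evec x p‖ ^ 2 := by
  rw [EuclideanSpace.norm_eq, Real.sq_sqrt (by positivity)]
  simp [evec]

lemma bessel_double {m : ℕ} {ι : Type*} [Fintype ι]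
    {φ : ι → EuclideanSpace ℂ (Fin m)} (hφ : Orthonormal ℂ φ) (u : Matrix (Fin m) (Fin m) ℂ) :
    ∑ i : ι, ∑ j : ι, ‖star (evec (φ i)) ⬝ᵥ u *ᵥ (evec (φ j))‖ ^ 2
      ≤ ∑ p, ∑ q, ‖u p q‖ ^ 2 := by
  have step1 : ∀ j, ∑ i : ι, ‖star (evec (φ i)) ⬝ᵥ u *ᵥ (evec (φ j))‖ ^ 2
      ≤ ∑ p, ‖(u *ᵥ (evec (φ j))) p‖ ^ 2 := by
    intro j
    set w : EuclideanSpace ℂ (Fin m) := (WithLp.equiv 2 (Fin m → ℂ)).symm (u *ᵥ (evec (φ j))) with hwdef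
    have hcoe : evec w = u *ᵥ (evec (φ j)) := rfl
    have b := hφ.sum_inner_products_le (s := Finset.univ) w
    have hL : ∀ i : ι, ‖(inner ℂ (φ i) w : ℂ)‖ ^ 2
        = ‖star (evec (φ i)) ⬝ᵥ u *ᵥ (evec (φ j))‖ ^ 2 := by
      intro i
      rw [euclid_inner_eq, hcoe]
    calc ∑ i : ι, ‖star (evec (φ i)) ⬝ᵥ u *ᵥ (evec (φ j))‖ ^ 2
        = ∑ i : ι, ‖(inner ℂ (φ i) w : ℂ)‖ ^ 2 := by
          exact (Finset.sum_congr rfl fun i _ => (hL i)).symm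
      _ ≤ ‖w‖ ^ 2 := b
      _ = ∑ p, ‖(u *ᵥ (evec (φ j))) p‖ ^ 2 := by
          rw [euclid_norm_sq, hcoe]
  have step2 : ∑ j : ι, ∑ p, ‖(u *ᵥ (evec (φ j))) p‖ ^ 2
      ≤ ∑ p, ∑ q, ‖u p q‖ ^ 2 := by
    rw [Finset.sum_comm]
    refine Finset.sum_le_sum fun p _ => ?_
    set r : EuclideanSpace ℂ (Fin m) := (WithLp.equiv 2 (Fin m → ℂ)).symm
      (fun q => starRingEnd ℂ (u p q)) with hrdef
    have hrcoe : ∀ q, evec r q = starRingEnd ℂ (u p q) := fun q => rfl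
    have b := hφ.sum_inner_products_le (s := Finset.univ) r
    have hL : ∀ j : ι, ‖(inner ℂ (φ j) r : ℂ)‖ ^ 2 = ‖(u *ᵥ (evec (φ j))) p‖ ^ 2 := by
      intro j
      rw [euclid_inner_eq]
      have : star (evec (φ j)) ⬝ᵥ (evec r)
          = starRingEnd ℂ ((u *ᵥ (evec (φ j))) p) := by
        simp only [dotProduct, Matrix.mulVec, Pi.star_apply, map_sum, _root_.map_mul, hrcoe]
        refine Finset.sum_congr rfl fun q _ => ?_
        simp [RCLike.star_def, mul_comm]
      rw [this, Complex.norm_conj]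
    have hR : ‖r‖ ^ 2 = ∑ q, ‖u p q‖ ^ 2 := by
      rw [euclid_norm_sq]
      refine Finset.sum_congr rfl fun q _ => ?_
      rw [hrcoe, Complex.norm_conj]
    calc ∑ j : ι, ‖(u *ᵥ (evec (φ j))) p‖ ^ 2
        = ∑ j : ι, ‖(inner ℂ (φ j) r : ℂ)‖ ^ 2 := (Finset.sum_congr rfl fun j _ => (hL j)).symm
      _ ≤ ‖r‖ ^ 2 := b
      _ = ∑ q, ‖u p q‖ ^ 2 := hR
  calc ∑ i : ι, ∑ j : ι, ‖star (evec (φ i)) ⬝ᵥ u *ᵥ (evec (φ j))‖ ^ 2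
      = ∑ j : ι, ∑ i : ι, ‖star (evec (φ i)) ⬝ᵥ u *ᵥ (evec (φ j))‖ ^ 2 :=
        Finset.sum_comm
    _ ≤ ∑ j : ι, ∑ p, ‖(u *ᵥ (evec (φ j))) p‖ ^ 2 :=
        Finset.sum_le_sum fun j _ => step1 j
    _ ≤ ∑ p, ∑ q, ‖u p q‖ ^ 2 := step2

lemma unit_sum_conj_mul {m : ℕ} (y : EuclideanSpace ℂ (Fin m)) (hy : ‖y‖ = 1) :
    ∑ k, starRingEnd ℂ (evec y k) * evec y k = 1 := by
  have h : ∀ k, starRingEnd ℂ (evec y k) * evec y k = ((‖evec y k‖ ^ 2 : ℝ) : ℂ) := by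
    intro k
    rw [mul_comm, Complex.mul_conj, Complex.sq_norm]
  rw [Finset.sum_congr rfl fun k _ => h k, ← Complex.ofReal_sum]
  have := euclid_norm_sq y
  rw [hy] at this
  rw [← this]
  norm_num

lemma traceNorm_smul_ketBra {m : ℕ} (c : ℂ) (x y : EuclideanSpace ℂ (Fin m))
    (hx : ‖x‖ = 1) (hy : ‖y‖ = 1) :
    traceNorm (c • ketBra x y) = ‖c‖ := by
  set A : Matrix (Fin m) (Fin m) ℂ := c • ketBra x y with hAdef
  set B : Matrix (Fin m) (Fin m) ℂ := (‖c‖ : ℂ) • Matrix.vecMulVec (evec y) (star (evec y)) with hBdef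
  have hxs := unit_sum_conj_mul x hx
  have hys := unit_sum_conj_mul y hy
  have hB : B.PosSemidef := by
    have : B = (Matrix.replicateCol Unit (fun k => ((Real.sqrt (‖c‖) : ℂ)) * evec y k)) *
        (Matrix.replicateCol Unit (fun k => ((Real.sqrt (‖c‖) : ℂ)) * evec y k))ᴴ := by
      ext i j
      simp only [hBdef, Matrix.smul_apply, Matrix.vecMulVec_apply, Matrix.mul_apply,
        Matrix.conjTranspose_apply, Matrix.replicateCol_apply, Finset.univ_unique, Finset.sum_singleton,
        Pi.star_apply, smul_eq_mul, star_mul']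
      rw [RCLike.star_def, Complex.conj_ofReal]
      have hss : ((Real.sqrt (‖c‖) : ℂ)) * ((Real.sqrt (‖c‖) : ℂ))
          = (‖c‖ : ℂ) := by
        norm_cast
        exact Real.mul_self_sqrt (norm_nonneg c)
      rw [← hss]
      ring
    rw [this]
    exact Matrix.posSemidef_self_mul_conjTranspose _
  have hsq : B ^ 2 = Aᴴ * A := by
    rw [pow_two]
    ext i j
    simp only [Matrix.mul_apply, hBdef, hAdef, Matrix.smul_apply, Matrix.vecMulVec_apply,
      Matrix.conjTranspose_apply, ketBra, smul_eq_mul, Pi.star_apply]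
    have hL : ∀ k : Fin m, (‖c‖ : ℂ) * (evec y i * star (evec y k)) *
        ((‖c‖ : ℂ) * (evec y k * star (evec y j)))
        = ((‖c‖ : ℂ) * (‖c‖ : ℂ) * (evec y i * star (evec y j))) *
          (starRingEnd ℂ (evec y k) * evec y k) := by
      intro k
      simp only [RCLike.star_def]
      ring
    have hR : ∀ k : Fin m, (star (c * (evec x k * star (evec y i)))) *
        (c * (evec x k * star (evec y j)))
        = ((starRingEnd ℂ c * c) * (evec y i * star (evec y j))) *
          (starRingEnd ℂ (evec x k) * evec x k) := by
      intro k
      simp only [star_mul', RCLike.star_def, Complex.conj_conj]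
      ring
    rw [Finset.sum_congr rfl fun k _ => hL k, Finset.sum_congr rfl fun k _ => hR k,
      ← Finset.mul_sum, ← Finset.mul_sum, hxs, hys]
    have habs : (‖c‖ : ℂ) * (‖c‖ : ℂ) = starRingEnd ℂ c * c := by
      rw [mul_comm (starRingEnd ℂ c) c, Complex.mul_conj, ← Complex.sq_norm]
      norm_cast
      ring
    rw [habs]
  have hP : (Aᴴ * A).PosSemidef := Matrix.posSemidef_conjTranspose_mul_self A
  have hBsqrt : B = CFC.sqrt (Aᴴ * A) :=
    (CFC.sqrt_unique (by rw [← pow_two]; exact hsq) hB.nonneg).symm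
  have : traceNorm A = B.trace.re := by
    rw [traceNorm_eq_sqrt, ← hBsqrt]
  rw [this, hBdef, Matrix.trace_smul, Matrix.trace, smul_eq_mul]
  have : ∑ i, (Matrix.vecMulVec (evec y) (star (evec y))).diag i
      = ∑ i, starRingEnd ℂ (evec y i) * evec y i := by
    refine Finset.sum_congr rfl fun i _ => ?_
    simp [Matrix.vecMulVec_apply, RCLike.star_def, mul_comm]
  rw [this, hys]
  simp

lemma traceNorm_ketBra {m : ℕ} (x y : EuclideanSpace ℂ (Fin m))
    (hx : ‖x‖ = 1) (hy : ‖y‖ = 1) :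
    traceNorm (ketBra x y) = 1 := by
  have := traceNorm_smul_ketBra 1 x y hx hy
  rw [one_smul] at this
  simpa using this

lemma kron_mulVec_tensor {m n : ℕ} (u : Matrix (Fin m) (Fin m) ℂ) (v : Matrix (Fin n) (Fin n) ℂ)
    (g1 : Fin m → ℂ) (g2 : Fin n → ℂ) :
    (u ⊗ₖ v) *ᵥ (fun q : Fin m × Fin n => g1 q.1 * g2 q.2)
      = fun p => (u *ᵥ g1) p.1 * (v *ᵥ g2) p.2 := by
  funext p
  simp only [Matrix.mulVec, dotProduct, Matrix.kroneckerMap_apply, Fintype.sum_prod_type]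
  rw [Finset.sum_mul_sum]
  refine Finset.sum_congr rfl fun q1 _ => Finset.sum_congr rfl fun q2 _ => ?_
  ring

lemma star_tensor_dot {m n : ℕ} (f1 : Fin m → ℂ) (f2 : Fin n → ℂ)
    (w1 : Fin m → ℂ) (w2 : Fin n → ℂ) :
    star (fun p : Fin m × Fin n => f1 p.1 * f2 p.2) ⬝ᵥ (fun p => w1 p.1 * w2 p.2)
      = (star f1 ⬝ᵥ w1) * (star f2 ⬝ᵥ w2) := by
  simp only [dotProduct, Pi.star_apply, star_mul', Fintype.sum_prod_type]
  rw [Finset.sum_mul_sum]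
  refine Finset.sum_congr rfl fun q1 _ => Finset.sum_congr rfl fun q2 _ => ?_
  ring

lemma dot_kron {m n : ℕ} (f1 g1 : Fin m → ℂ) (f2 g2 : Fin n → ℂ)
    (u : Matrix (Fin m) (Fin m) ℂ) (v : Matrix (Fin n) (Fin n) ℂ) :
    star (fun p : Fin m × Fin n => f1 p.1 * f2 p.2) ⬝ᵥ (u ⊗ₖ v) *ᵥ (fun q => g1 q.1 * g2 q.2)
      = (star f1 ⬝ᵥ u *ᵥ g1) * (star f2 ⬝ᵥ v *ᵥ g2) := by
  rw [kron_mulVec_tensor, star_tensor_dot]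

lemma ketBra_mulVec {m : ℕ} (x y : EuclideanSpace ℂ (Fin m)) (g : Fin m → ℂ) :
    (ketBra x y) *ᵥ g = (star (evec y) ⬝ᵥ g) • evec x := by
  funext p
  simp only [ketBra, Matrix.mulVec, dotProduct, Matrix.vecMulVec_apply, Pi.smul_apply,
    Pi.star_apply, smul_eq_mul]
  rw [Finset.sum_mul]
  exact Finset.sum_congr rfl fun q _ => by ring

lemma star_dot_ketBra_dot {m : ℕ} (x y f g : EuclideanSpace ℂ (Fin m)) :
    star (evec f) ⬝ᵥ (ketBra x y) *ᵥ (evec g)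
      = (star (evec f) ⬝ᵥ evec x) * (star (evec y) ⬝ᵥ evec g) := by
  rw [ketBra_mulVec, dotProduct_smul]
  simp [smul_eq_mul]
  ring

lemma sum_mulVec' {α k : Type*} [Fintype k] (s : Finset α) (A : α → Matrix k k ℂ) (x : k → ℂ) :
    (∑ i ∈ s, A i) *ᵥ x = ∑ i ∈ s, (A i) *ᵥ x := by
  funext p
  simp only [Matrix.mulVec, dotProduct, Matrix.sum_apply, Finset.sum_apply,
    Finset.sum_mul]
  exact Finset.sum_comm

lemma dotProduct_sum' {α k : Type*} [Fintype k] (s : Finset α) (v : k → ℂ) (w : α → k → ℂ) :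
    v ⬝ᵥ (∑ i ∈ s, w i) = ∑ i ∈ s, v ⬝ᵥ w i := by
  simp only [dotProduct, Finset.sum_apply, Finset.mul_sum]
  exact Finset.sum_comm

lemma orthonormal_dot {m : ℕ} {ι : Type*} [Fintype ι] [DecidableEq ι]
    {φ : ι → EuclideanSpace ℂ (Fin m)} (hφ : Orthonormal ℂ φ) (i k : ι) :
    star (evec (φ i)) ⬝ᵥ evec (φ k) = if i = k then 1 else 0 := by
  have h := (orthonormal_iff_ite (𝕜 := ℂ)).mp hφ i k
  rw [← h]
  simp [PiLp.inner_apply, dotProduct, RCLike.inner_apply, evec, mul_comm]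

/-- If `ρ = ∑ i j, a i j • |φ i⟩⟨φ j| ⊗ |χ i⟩⟨χ j|` is a density operator, with `φ`, `χ`
orthonormal, then `‖ρ‖_γ = ∑ i j, |a i j|`. -/
theorem gammaNorm_of_schmidt_correlated (m n : ℕ) {ι : Type*} [Fintype ι]
    (φ : ι → EuclideanSpace ℂ (Fin m)) (χ : ι → EuclideanSpace ℂ (Fin n))
    (hφ : Orthonormal ℂ φ) (hχ : Orthonormal ℂ χ)
    (a : ι → ι → ℂ)
    (ρ : Matrix (Fin m × Fin n) (Fin m × Fin n) ℂ)
    (hρdef : ρ = ∑ i, ∑ j, a i j • (ketBra (φ i) (φ j)) ⊗ₖ (ketBra (χ i) (χ j)))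
    (hρ : IsDensity ρ) :
    gammaNorm ρ = ∑ i, ∑ j, ‖a i j‖ := by
  classical
  set z : ι → (Fin m × Fin n → ℂ) := fun i => fun p => evec (φ i) p.1 * evec (χ i) p.2 with hz
  -- recovery of coefficients
  have hrec : ∀ i j, star (z i) ⬝ᵥ ρ *ᵥ (z j) = a i j := by
    intro i j
    rw [hρdef]
    rw [sum_mulVec', dotProduct_sum']
    have hterm : ∀ k, star (z i) ⬝ᵥ (∑ l, a k l • (ketBra (φ k) (φ l)) ⊗ₖ (ketBra (χ k) (χ l))) *ᵥ z j
        = ∑ l, a k l * ((if i = k then 1 else 0) * (if l = j then 1 else 0) *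
            ((if i = k then 1 else 0) * (if l = j then 1 else 0))) := by
      intro k
      rw [sum_mulVec', dotProduct_sum']
      refine Finset.sum_congr rfl fun l _ => ?_
      rw [Matrix.smul_mulVec, dotProduct_smul, smul_eq_mul]
      congr 1
      have := dot_kron (evec (φ i)) (evec (φ j)) (evec (χ i)) (evec (χ j))
        (ketBra (φ k) (φ l)) (ketBra (χ k) (χ l))
      rw [hz]
      rw [this, star_dot_ketBra_dot, star_dot_ketBra_dot,
        orthonormal_dot hφ i k, orthonormal_dot hφ l j,
        orthonormal_dot hχ i k, orthonormal_dot hχ l j]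
    rw [Finset.sum_congr rfl fun k _ => hterm k]
    simp only [mul_ite, mul_one, mul_zero, ite_mul, one_mul, zero_mul]
    simp [Finset.sum_ite_eq, Finset.sum_ite_eq']
  -- the target value
  set T : ℝ := ∑ i, ∑ j, ‖a i j‖ with hT
  -- the set
  have hset : gammaNorm ρ = sInf { c : ℝ | ∃ (r : ℕ) (u : Fin r → Matrix (Fin m) (Fin m) ℂ)
      (v : Fin r → Matrix (Fin n) (Fin n) ℂ),
      ρ = ∑ i, (u i) ⊗ₖ (v i) ∧ c = ∑ i, traceNorm (u i) * traceNorm (v i) } := rfl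
  -- membership: explicit decomposition
  have hmem : T ∈ { c : ℝ | ∃ (r : ℕ) (u : Fin r → Matrix (Fin m) (Fin m) ℂ)
      (v : Fin r → Matrix (Fin n) (Fin n) ℂ),
      ρ = ∑ i, (u i) ⊗ₖ (v i) ∧ c = ∑ i, traceNorm (u i) * traceNorm (v i) } := by
    set e : Fin (Fintype.card (ι × ι)) ≃ ι × ι := (Fintype.equivFin (ι × ι)).symm with he
    refine ⟨Fintype.card (ι × ι),
      fun k => a (e k).1 (e k).2 • ketBra (φ (e k).1) (φ (e k).2),
      fun k => ketBra (χ (e k).1) (χ (e k).2), ?_, ?_⟩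
    · rw [hρdef]
      calc ∑ i, ∑ j, a i j • (ketBra (φ i) (φ j)) ⊗ₖ (ketBra (χ i) (χ j))
          = ∑ p : ι × ι, a p.1 p.2 • (ketBra (φ p.1) (φ p.2)) ⊗ₖ (ketBra (χ p.1) (χ p.2)) := by
            rw [Fintype.sum_prod_type]
        _ = ∑ k : Fin (Fintype.card (ι × ι)), a (e k).1 (e k).2 •
              (ketBra (φ (e k).1) (φ (e k).2)) ⊗ₖ (ketBra (χ (e k).1) (χ (e k).2)) :=
            (Equiv.sum_comp e _).symm
        _ = ∑ k : Fin (Fintype.card (ι × ι)),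
              (a (e k).1 (e k).2 • ketBra (φ (e k).1) (φ (e k).2)) ⊗ₖ
                (ketBra (χ (e k).1) (χ (e k).2)) := by
            refine Finset.sum_congr rfl fun k _ => ?_
            rw [Matrix.smul_kronecker]
    · rw [hT]
      calc ∑ i, ∑ j, ‖a i j‖
          = ∑ p : ι × ι, ‖a p.1 p.2‖ := by rw [Fintype.sum_prod_type]
        _ = ∑ k : Fin (Fintype.card (ι × ι)), ‖a (e k).1 (e k).2‖ :=
            (Equiv.sum_comp e _).symm
        _ = ∑ k : Fin (Fintype.card (ι × ι)),
              traceNorm (a (e k).1 (e k).2 • ketBra (φ (e k).1) (φ (e k).2)) *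
                traceNorm (ketBra (χ (e k).1) (χ (e k).2)) := by
            refine Finset.sum_congr rfl fun k _ => ?_
            rw [traceNorm_smul_ketBra _ _ _ (hφ.1 (e k).1) (hφ.1 (e k).2),
              traceNorm_ketBra _ _ (hχ.1 (e k).1) (hχ.1 (e k).2), mul_one]
  -- lower bound: every element of the set is at least T
  have hlow : ∀ c ∈ { c : ℝ | ∃ (r : ℕ) (u : Fin r → Matrix (Fin m) (Fin m) ℂ)
      (v : Fin r → Matrix (Fin n) (Fin n) ℂ),
      ρ = ∑ i, (u i) ⊗ₖ (v i) ∧ c = ∑ i, traceNorm (u i) * traceNorm (v i) }, T ≤ c := by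
    rintro c ⟨r, u, v, hdecomp, hc⟩
    set B : Fin r → ι → ι → ℂ := fun k i j => star (evec (φ i)) ⬝ᵥ (u k) *ᵥ evec (φ j) with hB
    set C : Fin r → ι → ι → ℂ := fun k i j => star (evec (χ i)) ⬝ᵥ (v k) *ᵥ evec (χ j) with hC
    have ha : ∀ i j, a i j = ∑ k, B k i j * C k i j := by
      intro i j
      rw [← hrec i j, hdecomp, sum_mulVec', dotProduct_sum']
      refine Finset.sum_congr rfl fun k _ => ?_
      exact dot_kron (evec (φ i)) (evec (φ j)) (evec (χ i)) (evec (χ j)) (u k) (v k)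
    -- per-k bound
    have hk : ∀ k, ∑ i, ∑ j, ‖B k i j‖ * ‖C k i j‖
        ≤ traceNorm (u k) * traceNorm (v k) := by
      intro k
      have hcs : (∑ p : ι × ι, ‖B k p.1 p.2‖ * ‖C k p.1 p.2‖) ^ 2
          ≤ (∑ p : ι × ι, ‖B k p.1 p.2‖ ^ 2) *
            (∑ p : ι × ι, ‖C k p.1 p.2‖ ^ 2) :=
        Finset.sum_mul_sq_le_sq_mul_sq Finset.univ _ _
      have hBb : ∑ p : ι × ι, ‖B k p.1 p.2‖ ^ 2 ≤ traceNorm (u k) ^ 2 := by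
        rw [Fintype.sum_prod_type]
        exact le_trans (bessel_double hφ (u k)) (sum_abs_sq_le_traceNorm_sq (u k))
      have hCb : ∑ p : ι × ι, ‖C k p.1 p.2‖ ^ 2 ≤ traceNorm (v k) ^ 2 := by
        rw [Fintype.sum_prod_type]
        exact le_trans (bessel_double hχ (v k)) (sum_abs_sq_le_traceNorm_sq (v k))
      have hsum_nonneg : 0 ≤ ∑ p : ι × ι, ‖B k p.1 p.2‖ * ‖C k p.1 p.2‖ :=
        Finset.sum_nonneg fun p _ => mul_nonneg (norm_nonneg _) (norm_nonneg _)
      have hBs_nonneg : 0 ≤ ∑ p : ι × ι, ‖B k p.1 p.2‖ ^ 2 :=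
        Finset.sum_nonneg fun p _ => sq_nonneg _
      have hCs_nonneg : 0 ≤ ∑ p : ι × ι, ‖C k p.1 p.2‖ ^ 2 :=
        Finset.sum_nonneg fun p _ => sq_nonneg _
      have htu := traceNorm_nonneg (u k)
      have htv := traceNorm_nonneg (v k)
      have key : (∑ p : ι × ι, ‖B k p.1 p.2‖ * ‖C k p.1 p.2‖)
          ≤ traceNorm (u k) * traceNorm (v k) := by
        nlinarith [hcs, hBb, hCb, hsum_nonneg, hBs_nonneg, hCs_nonneg, htu, htv,
          mul_nonneg htu htv]
      calc ∑ i, ∑ j, ‖B k i j‖ * ‖C k i j‖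
          = ∑ p : ι × ι, ‖B k p.1 p.2‖ * ‖C k p.1 p.2‖ := by
            rw [Fintype.sum_prod_type]
        _ ≤ traceNorm (u k) * traceNorm (v k) := key
    calc T = ∑ i, ∑ j, ‖a i j‖ := hT
      _ ≤ ∑ i, ∑ j, ∑ k, ‖B k i j‖ * ‖C k i j‖ := by
          refine Finset.sum_le_sum fun i _ => Finset.sum_le_sum fun j _ => ?_
          rw [ha i j]
          refine le_trans (norm_sum_le _ _) ?_
          exact Finset.sum_le_sum fun k _ => le_of_eq (norm_mul _ _)
      _ = ∑ k, ∑ i, ∑ j, ‖B k i j‖ * ‖C k i j‖ := by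
          calc ∑ i, ∑ j, ∑ k, ‖B k i j‖ * ‖C k i j‖
              = ∑ i, ∑ k, ∑ j, ‖B k i j‖ * ‖C k i j‖ :=
              Finset.sum_congr rfl fun i _ => Finset.sum_comm
            _ = ∑ k, ∑ i, ∑ j, ‖B k i j‖ * ‖C k i j‖ :=
              Finset.sum_comm
      _ ≤ ∑ k, traceNorm (u k) * traceNorm (v k) :=
          Finset.sum_le_sum fun k _ => hk k
      _ = c := hc.symm
  -- conclude
  rw [hset]
  exact le_antisymm (csInf_le ⟨T, fun c hc => hlow c hc⟩ hmem) (le_csInf ⟨T, hmem⟩ hlow)
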